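/- Let A be a real d×d matrix, H a real symmetric d×d matrix, and c ∈ (0,1). Then there exists a constant η > 0, depending only on A, H, and c, such that every solution φ of the linear ODE φ̇(t) = A φ(t) whose initial condition satisfies φ(0)ᵀ H φ(0) ≤ −‖φ(0)‖² satisfies φ(t)ᵀ H φ(t) ≤ −c ‖φ(t)‖² for all t ∈ [0, η]. (Applied with A = −(a/b) L̄_{σ(t_k)}, H = H_{σ(t_k)}, and c = μ_{σ(t_k)} λ_max(P), this shows the dwell time t_{k+1} − t_k of the switching law is lower bounded by a positive constant, so the switching law is well defined.) -/

import Mathlib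

open Matrix

lemma aux_sq_le {d : ℕ} (x : Fin d → ℝ) (i : Fin d) : x i * x i ≤ x ⬝ᵥ x :=
  Finset.single_le_sum (fun k _ => mul_self_nonneg (x k)) (Finset.mem_univ i)

lemma aux_dot_nonneg {d : ℕ} (x : Fin d → ℝ) : 0 ≤ x ⬝ᵥ x :=
  Finset.sum_nonneg fun k _ => mul_self_nonneg (x k)

lemma aux_quad_abs {d : ℕ} (C : Matrix (Fin d) (Fin d) ℝ) (x : Fin d → ℝ) :
    |x ⬝ᵥ C.mulVec x| ≤ (∑ i, ∑ j, |C i j|) * (x ⬝ᵥ x) := by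
  have hxx : ∀ i j, |x i * x j| ≤ x ⬝ᵥ x := by
    intro i j
    have hi := aux_sq_le x i
    have hj := aux_sq_le x j
    rw [abs_le]
    constructor
    · nlinarith [sq_nonneg (x i + x j)]
    · nlinarith [sq_nonneg (x i - x j)]
  have heq : x ⬝ᵥ C.mulVec x = ∑ i, ∑ j, x i * (C i j * x j) := by
    simp [dotProduct, Matrix.mulVec, Finset.mul_sum]
  calc |x ⬝ᵥ C.mulVec x| = |∑ i, ∑ j, x i * (C i j * x j)| := by rw [heq]
    _ ≤ ∑ i, |∑ j, x i * (C i j * x j)| := Finset.abs_sum_le_sum_abs _ _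
    _ ≤ ∑ i, ∑ j, |x i * (C i j * x j)| := by
        refine Finset.sum_le_sum fun i _ => Finset.abs_sum_le_sum_abs _ _
    _ ≤ ∑ i, ∑ j, |C i j| * (x ⬝ᵥ x) := by
        refine Finset.sum_le_sum fun i _ => Finset.sum_le_sum fun j _ => ?_
        have : |x i * (C i j * x j)| = |C i j| * |x i * x j| := by
          rw [abs_mul, abs_mul, abs_mul]; ring
        rw [this]
        exact mul_le_mul_of_nonneg_left (hxx i j) (abs_nonneg _)
    _ = (∑ i, ∑ j, |C i j|) * (x ⬝ᵥ x) := by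
        simp [Finset.sum_mul]

lemma aux_hasDerivAt {d : ℕ} (A B : Matrix (Fin d) (Fin d) ℝ) (φ : ℝ → Fin d → ℝ)
    (hφ : ∀ t : ℝ, HasDerivAt φ (A.mulVec (φ t)) t) (t : ℝ) :
    HasDerivAt (fun s => φ s ⬝ᵥ B.mulVec (φ s))
      (φ t ⬝ᵥ ((Aᵀ * B + B * A).mulVec (φ t))) t := by
  have hcoord : ∀ i, HasDerivAt (fun s => φ s i) (A.mulVec (φ t) i) t :=
    hasDerivAt_pi.1 (hφ t)
  have h1 : HasDerivAt (fun s => ∑ i, φ s i * ∑ j, B i j * φ s j)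
      (∑ i, (A.mulVec (φ t) i * ∑ j, B i j * φ t j
        + φ t i * ∑ j, B i j * A.mulVec (φ t) j)) t := by
    refine HasDerivAt.fun_sum fun i _ => ?_
    exact (hcoord i).mul (HasDerivAt.fun_sum fun j _ => (hcoord j).const_mul (B i j))
  have key : φ t ⬝ᵥ (Aᵀ * B + B * A).mulVec (φ t)
      = A.mulVec (φ t) ⬝ᵥ B.mulVec (φ t) + φ t ⬝ᵥ B.mulVec (A.mulVec (φ t)) := by
    rw [Matrix.add_mulVec, dotProduct_add]
    congr 1
    · rw [← Matrix.mulVec_mulVec, Matrix.dotProduct_mulVec, Matrix.vecMul_transpose]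
    · rw [Matrix.mulVec_mulVec]
  have hfun : (fun s => φ s ⬝ᵥ B.mulVec (φ s))
      = fun s => ∑ i, φ s i * ∑ j, B i j * φ s j := by
    funext s
    simp [dotProduct, Matrix.mulVec]
  have hval : φ t ⬝ᵥ (Aᵀ * B + B * A).mulVec (φ t)
      = ∑ i, (A.mulVec (φ t) i * ∑ j, B i j * φ t j
        + φ t i * ∑ j, B i j * A.mulVec (φ t) j) := by
    rw [key, Finset.sum_add_distrib]
    congr 1 <;> simp [dotProduct, Matrix.mulVec]
  rw [hfun, hval]
  exact h1

/-- Let `A` be a real `d×d` matrix, `H` real symmetric `d×d`, and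
`c ∈ (0,1)`. Then there is `η > 0`, depending only on `A`, `H`, `c`, such that every
solution `φ` of `φ̇ = A φ` with `φ(0)ᵀ H φ(0) ≤ −‖φ(0)‖²` satisfies
`φ(t)ᵀ H φ(t) ≤ −c ‖φ(t)‖²` for all `t ∈ [0, η]` (Euclidean `‖x‖² = x ⬝ᵥ x`).
This lower-bounds the dwell time of the switching law, so it is well defined. -/
theorem stmt_8 (d : ℕ)
    (A H : Matrix (Fin d) (Fin d) ℝ) (hH : Hᵀ = H)
    (c : ℝ) (hc0 : 0 < c) (hc1 : c < 1) :
    ∃ η : ℝ, 0 < η ∧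
      ∀ φ : ℝ → Fin d → ℝ,
        (∀ t : ℝ, HasDerivAt φ (A.mulVec (φ t)) t) →
        φ 0 ⬝ᵥ H.mulVec (φ 0) ≤ -(φ 0 ⬝ᵥ φ 0) →
        ∀ t ∈ Set.Icc (0 : ℝ) η, φ t ⬝ᵥ H.mulVec (φ t) ≤ -c * (φ t ⬝ᵥ φ t) := by
  set B : Matrix (Fin d) (Fin d) ℝ := H + c • (1 : Matrix (Fin d) (Fin d) ℝ) with hB
  set C₁ : Matrix (Fin d) (Fin d) ℝ := Aᵀ * B + B * A with hC₁
  set C₂ : Matrix (Fin d) (Fin d) ℝ := Aᵀ * 1 + 1 * A with hC₂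
  set K : ℝ := (∑ i, ∑ j, |C₁ i j|) + (∑ i, ∑ j, |C₂ i j|) + 1 with hK
  have hK1 : (1 : ℝ) ≤ K := by
    have h1 : 0 ≤ ∑ i, ∑ j, |C₁ i j| :=
      Finset.sum_nonneg fun i _ => Finset.sum_nonneg fun j _ => abs_nonneg _
    have h2 : 0 ≤ ∑ i, ∑ j, |C₂ i j| :=
      Finset.sum_nonneg fun i _ => Finset.sum_nonneg fun j _ => abs_nonneg _
    linarith
  have hKpos : (0 : ℝ) < K := by linarith
  have hKC₁ : (∑ i, ∑ j, |C₁ i j|) ≤ K := by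
    have h2 : 0 ≤ ∑ i, ∑ j, |C₂ i j| :=
      Finset.sum_nonneg fun i _ => Finset.sum_nonneg fun j _ => abs_nonneg _
    linarith
  have hKC₂ : (∑ i, ∑ j, |C₂ i j|) ≤ K := by
    have h1 : 0 ≤ ∑ i, ∑ j, |C₁ i j| :=
      Finset.sum_nonneg fun i _ => Finset.sum_nonneg fun j _ => abs_nonneg _
    linarith
  have h2c : (1 : ℝ) < 2 - c := by linarith
  refine ⟨Real.log (2 - c) / K, div_pos (Real.log_pos h2c) hKpos, ?_⟩
  set η : ℝ := Real.log (2 - c) / K with hη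
  have hη0 : 0 < η := div_pos (Real.log_pos h2c) hKpos
  intro φ hφ h0 t ht
  -- the quadratic functionals
  set n : ℝ → ℝ := fun s => φ s ⬝ᵥ φ s with hn
  set g : ℝ → ℝ := fun s => φ s ⬝ᵥ B.mulVec (φ s) with hg
  have hnnonneg : ∀ s, 0 ≤ n s := fun s => aux_dot_nonneg (φ s)
  have hnderiv : ∀ s, HasDerivAt n (φ s ⬝ᵥ C₂.mulVec (φ s)) s := by
    intro s
    have := aux_hasDerivAt A 1 φ hφ s
    simpa [hn, hC₂, Matrix.one_mulVec, Matrix.mul_one, Matrix.one_mul] using this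
  have hgderiv : ∀ s, HasDerivAt g (φ s ⬝ᵥ C₁.mulVec (φ s)) s :=
    fun s => aux_hasDerivAt A B φ hφ s
  -- Gronwall bound for n
  have hgron : ∀ s ∈ Set.Icc (0 : ℝ) η, n s ≤ n 0 * Real.exp (K * s) := by
    intro s hs
    have := norm_le_gronwallBound_of_norm_deriv_right_le
      (f := n) (f' := fun s => φ s ⬝ᵥ C₂.mulVec (φ s)) (δ := n 0) (K := K) (ε := 0)
      (a := 0) (b := η)
      (fun x _ => (hnderiv x).continuousAt.continuousWithinAt)
      (fun x _ => (hnderiv x).hasDerivWithinAt)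
      (by rw [Real.norm_eq_abs, abs_of_nonneg (hnnonneg 0)])
      (fun x _ => by
        rw [Real.norm_eq_abs, Real.norm_eq_abs, abs_of_nonneg (hnnonneg x)]
        have h1 := aux_quad_abs C₂ (φ x)
        have h2 : (∑ i, ∑ j, |C₂ i j|) * (φ x ⬝ᵥ φ x) ≤ K * n x :=
          mul_le_mul_of_nonneg_right hKC₂ (hnnonneg x)
        simp only [add_zero]
        exact h1.trans h2)
      s hs
    rw [gronwallBound_ε0, Real.norm_eq_abs, abs_of_nonneg (hnnonneg s), sub_zero] at this
    exact this
  -- the comparison function F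
  set F : ℝ → ℝ := fun s => g s - n 0 * Real.exp (K * s) with hF
  have hFd : ∀ s, HasDerivAt F
      (φ s ⬝ᵥ C₁.mulVec (φ s) - n 0 * (Real.exp (K * s) * K)) s := by
    intro s
    have h2 : HasDerivAt (fun s => n 0 * Real.exp (K * s))
        (n 0 * (Real.exp (K * s) * K)) s := by
      simpa using (((hasDerivAt_id s).const_mul K).exp).const_mul (n 0)
    exact (hgderiv s).sub h2
  have hanti : AntitoneOn F (Set.Icc 0 η) := by
    refine antitoneOn_of_deriv_nonpos (convex_Icc 0 η)
      (fun x _ => (hFd x).continuousAt.continuousWithinAt)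
      (fun x _ => (hFd x).differentiableAt.differentiableWithinAt) ?_
    intro x hx
    rw [interior_Icc] at hx
    rw [(hFd x).deriv]
    have hq := (abs_le.1 (aux_quad_abs C₁ (φ x))).2
    have hb : (∑ i, ∑ j, |C₁ i j|) * (φ x ⬝ᵥ φ x) ≤ K * n x :=
      mul_le_mul_of_nonneg_right hKC₁ (hnnonneg x)
    have hnx : n x ≤ n 0 * Real.exp (K * x) :=
      hgron x ⟨le_of_lt hx.1, le_of_lt hx.2⟩
    have : K * n x ≤ K * (n 0 * Real.exp (K * x)) :=
      mul_le_mul_of_nonneg_left hnx (le_of_lt hKpos)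
    nlinarith
  have hFt : F t ≤ F 0 := hanti ⟨le_refl 0, le_of_lt hη0⟩ ht ht.1
  -- unfold F
  have hgt : g t ≤ g 0 - n 0 + n 0 * Real.exp (K * t) := by
    have : F 0 = g 0 - n 0 := by simp [hF]
    rw [this] at hFt
    simp only [hF] at hFt
    linarith
  -- bound the exponential
  have hexp : Real.exp (K * t) ≤ 2 - c := by
    have hKη : K * η = Real.log (2 - c) := by
      rw [hη]; field_simp
    have : K * t ≤ K * η := mul_le_mul_of_nonneg_left ht.2 (le_of_lt hKpos)
    calc Real.exp (K * t) ≤ Real.exp (K * η) := Real.exp_le_exp.2 this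
      _ = 2 - c := by rw [hKη, Real.exp_log (by linarith)]
  -- expand g in terms of H and n
  have hgexp : ∀ s, g s = φ s ⬝ᵥ H.mulVec (φ s) + c * n s := by
    intro s
    simp [hg, hB, hn, Matrix.add_mulVec, Matrix.smul_mulVec, Matrix.one_mulVec,
      dotProduct_add, dotProduct_smul, smul_eq_mul]
  have hg0 : g 0 ≤ -(n 0) + c * n 0 := by
    rw [hgexp 0]; linarith
  have hfinal : g t ≤ 0 := by
    have hmul : n 0 * Real.exp (K * t) ≤ n 0 * (2 - c) :=
      mul_le_mul_of_nonneg_left hexp (hnnonneg 0)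
    nlinarith
  rw [hgexp t] at hfinal
  linarith
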